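/- Let F, K be monic polynomials in F_q[T] and x ≥ 0 with deg(KF) < x. Then ∑_{N monic, deg N = x, gcd(N,F)=1} d(N)·d(KF + N) ≪ q^x·x²·∑_{H | K, deg H ≤ x/2} d(H)/|H|, where d is the divisor function on F_q[T]. -/

import Mathlib

open Polynomial
open scoped Classical

/-- The divisor function on `F_q[T]`: the number of monic divisors of `N`. -/
noncomputable def ffD {Fq : Type*} [Field Fq] (N : Polynomial Fq) : ℕ :=
  Nat.card {D : Polynomial Fq // D.Monic ∧ D ∣ N}

section DDSAux
open Finset

variable {Fq : Type} [Field Fq] [Fintype Fq]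

noncomputable def mSet (Fq : Type) [Field Fq] [Fintype Fq] (d : ℕ) : Finset (Polynomial Fq) :=
  (Finset.univ : Finset (Fin d → Fq)).image
    (fun c => X ^ d + ∑ i : Fin d, C (c i) * X ^ (i : ℕ))

lemma mem_mSet {d : ℕ} {p : Polynomial Fq} :
    p ∈ mSet Fq d ↔ p.Monic ∧ p.natDegree = d := by
  constructor
  · rintro hp
    simp only [mSet, Finset.mem_image] at hp
    obtain ⟨c, -, rfl⟩ := hp
    have hs : (∑ i : Fin d, C (c i) * X ^ (i : ℕ)).degree < (X ^ d : Polynomial Fq).degree := by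
      rw [degree_X_pow]
      refine lt_of_le_of_lt (degree_sum_le _ _) ?_
      rw [Finset.sup_lt_iff (by exact_mod_cast WithBot.bot_lt_coe d)]
      intro i _
      exact lt_of_le_of_lt (degree_C_mul_X_pow_le _ _) (by exact_mod_cast i.2)
    have hm : (X ^ d + ∑ i : Fin d, C (c i) * X ^ (i : ℕ)).Monic :=
      (monic_X_pow d).add_of_left hs
    refine ⟨hm, ?_⟩
    have := degree_add_eq_left_of_degree_lt hs
    rw [degree_X_pow] at this
    exact natDegree_eq_of_degree_eq_some this
  · rintro ⟨hm, rfl⟩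
    simp only [mSet, Finset.mem_image]
    refine ⟨fun i => p.coeff i, Finset.mem_univ _, ?_⟩
    calc X ^ p.natDegree + ∑ i : Fin p.natDegree, C (p.coeff i) * X ^ (i : ℕ)
        = ∑ i ∈ Finset.range p.natDegree, C (p.coeff i) * X ^ i
            + C (p.coeff p.natDegree) * X ^ p.natDegree := by
          rw [Fin.sum_univ_eq_sum_range (fun i => C (p.coeff i) * X ^ i), hm.coeff_natDegree, C_1]
          ring
      _ = ∑ i ∈ Finset.range (p.natDegree + 1), C (p.coeff i) * X ^ i := by
          rw [Finset.sum_range_succ]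
      _ = p := by
          simp only [C_mul_X_pow_eq_monomial]
          exact (as_sum_range' p (p.natDegree + 1) (Nat.lt_succ_self _)).symm

lemma card_mSet_le (d : ℕ) : ((mSet Fq d).card : ℝ) ≤ (Fintype.card Fq : ℝ) ^ d := by
  have : (mSet Fq d).card ≤ Fintype.card Fq ^ d := le_trans Finset.card_image_le (by simp)
  exact_mod_cast this

noncomputable def mLe (Fq : Type) [Field Fq] [Fintype Fq] (n : ℕ) : Finset (Polynomial Fq) :=
  (Finset.range (n + 1)).biUnion (mSet Fq)

lemma mem_mLe {n : ℕ} {p : Polynomial Fq} :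
    p ∈ mLe Fq n ↔ p.Monic ∧ p.natDegree ≤ n := by
  simp only [mLe, Finset.mem_biUnion, Finset.mem_range, mem_mSet]
  constructor
  · rintro ⟨d, hd, hm, rfl⟩; exact ⟨hm, by omega⟩
  · rintro ⟨hm, hd⟩; exact ⟨p.natDegree, by omega, hm, rfl⟩

lemma ffD_eq_card {N : Polynomial Fq} (hN : N ≠ 0) :
    ffD N = ((mLe Fq N.natDegree).filter (· ∣ N)).card := by
  have hset : {D : Polynomial Fq | D.Monic ∧ D ∣ N} =
      ↑((mLe Fq N.natDegree).filter (· ∣ N)) := by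
    ext D
    simp only [Set.mem_setOf_eq, Finset.coe_filter, Set.mem_setOf_eq, mem_mLe]
    constructor
    · rintro ⟨hm, hd⟩; exact ⟨⟨hm, natDegree_le_of_dvd hd hN⟩, hd⟩
    · rintro ⟨⟨hm, -⟩, hd⟩; exact ⟨hm, hd⟩
  have h0 : Nat.card {D : Polynomial Fq // D.Monic ∧ D ∣ N}
      = Nat.card ↥{D : Polynomial Fq | D.Monic ∧ D ∣ N} := rfl
  rw [ffD, h0, Nat.card_coe_set_eq, hset, Set.ncard_coe_finset]

lemma one_le_ffD {N : Polynomial Fq} (hN : N ≠ 0) : 1 ≤ ffD N := by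
  rw [ffD_eq_card hN]
  refine Finset.card_pos.2 ⟨1, ?_⟩
  simp [mem_mLe, monic_one]

lemma dvd_self_divByMonic {A N : Polynomial Fq} (hAm : A.Monic) (hAd : A ∣ N) :
    A * (N /ₘ A) = N := by
  conv_rhs => rw [← modByMonic_add_div N A]
  rw [(modByMonic_eq_zero_iff_dvd hAm).2 hAd, zero_add]

lemma ffD_le_two_mul {x : ℕ} {N : Polynomial Fq} (hm : N.Monic) (hd : N.natDegree = x) :
    ffD N ≤ 2 * ((mLe Fq x).filter (fun A => A ∣ N ∧ 2 * A.natDegree ≤ x)).card := by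
  have hN0 : N ≠ 0 := hm.ne_zero
  rw [ffD_eq_card hN0, hd]
  have hsplit := Finset.card_filter_add_card_filter_not
    (s := (mLe Fq x).filter (· ∣ N)) (p := fun A => 2 * A.natDegree ≤ x)
  have hfe : ((mLe Fq x).filter (· ∣ N)).filter (fun A => 2 * A.natDegree ≤ x)
      = (mLe Fq x).filter (fun A => A ∣ N ∧ 2 * A.natDegree ≤ x) := by
    rw [Finset.filter_filter]
  have hlarge : (((mLe Fq x).filter (· ∣ N)).filter (fun A => ¬ 2 * A.natDegree ≤ x)).card
      ≤ ((mLe Fq x).filter (fun A => A ∣ N ∧ 2 * A.natDegree ≤ x)).card := by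
    refine Finset.card_le_card_of_injOn (fun A => N /ₘ A) ?_ ?_
    · intro A hA
      simp only [Finset.mem_coe, Finset.mem_filter, mem_mLe] at hA
      obtain ⟨⟨⟨hAm, hAx⟩, hAd⟩, hAbig⟩ := hA
      have hdegle : A.degree ≤ N.degree := degree_le_of_dvd hAd hN0
      have hmono : (N /ₘ A).Monic := by
        unfold Monic
        rw [leadingCoeff_divByMonic_of_monic hAm hdegle]
        exact hm
      have hnd : (N /ₘ A).natDegree = x - A.natDegree := by
        rw [natDegree_divByMonic _ hAm, hd]
      have hdvd : (N /ₘ A) ∣ N := ⟨A, by rw [mul_comm]; exact (dvd_self_divByMonic hAm hAd).symm⟩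
      simp only [Finset.mem_coe, Finset.mem_filter, mem_mLe]
      refine ⟨⟨hmono, by omega⟩, hdvd, by omega⟩
    · intro A1 h1 A2 h2 heq
      simp only [Finset.mem_coe, Finset.mem_filter, mem_mLe] at h1 h2
      dsimp only at heq
      have e1 : A1 * (N /ₘ A1) = N := dvd_self_divByMonic h1.1.1.1 h1.1.2
      have e2 : A2 * (N /ₘ A2) = N := dvd_self_divByMonic h2.1.1.1 h2.1.2
      have hne : N /ₘ A1 ≠ 0 := by
        intro h0; rw [h0, mul_zero] at e1; exact hN0 e1.symm
      have : A1 * (N /ₘ A1) = A2 * (N /ₘ A1) := by rw [e1, heq, e2]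
      exact mul_right_cancel₀ hne this
  rw [hfe] at hsplit
  omega

lemma card_residue_le {x : ℕ} {L c : Polynomial Fq} (hL : L.Monic) (hLx : L.natDegree ≤ x) :
    (((mSet Fq x).filter (fun N => N %ₘ L = c)).card : ℝ)
      ≤ (Fintype.card Fq : ℝ) ^ (x - L.natDegree) := by
  have key : ((mSet Fq x).filter (fun N => N %ₘ L = c)).card
      ≤ (mSet Fq (x - L.natDegree)).card := by
    refine Finset.card_le_card_of_injOn (fun N => N /ₘ L) ?_ ?_
    · intro N hN
      simp only [Finset.mem_coe, Finset.mem_filter, mem_mSet] at hN ⊢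
      obtain ⟨⟨hNm, hNd⟩, -⟩ := hN
      have hdegle : L.degree ≤ N.degree := by
        rw [degree_eq_natDegree hL.ne_zero, degree_eq_natDegree hNm.ne_zero]
        exact_mod_cast hNd ▸ hLx
      constructor
      · unfold Monic
        rw [leadingCoeff_divByMonic_of_monic hL hdegle]
        exact hNm
      · rw [natDegree_divByMonic _ hL, hNd]
    · intro N1 h1 N2 h2 heq
      simp only [Finset.mem_coe, Finset.mem_filter, mem_mSet] at h1 h2
      dsimp only at heq
      have e1 := modByMonic_add_div N1 L
      have e2 := modByMonic_add_div N2 L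
      rw [← e1, ← e2, h1.2, h2.2, heq]
  calc (((mSet Fq x).filter (fun N => N %ₘ L = c)).card : ℝ)
      ≤ ((mSet Fq (x - L.natDegree)).card : ℝ) := by exact_mod_cast key
    _ ≤ _ := card_mSet_le _

lemma sum_inv_mLe (m : ℕ) :
    ∑ A ∈ mLe Fq m, ((Fintype.card Fq : ℝ) ^ A.natDegree)⁻¹ ≤ (m : ℝ) + 1 := by
  have hq : (0:ℝ) < Fintype.card Fq := by exact_mod_cast Fintype.card_pos
  have hdisj : ∀ d1 ∈ Finset.range (m+1), ∀ d2 ∈ Finset.range (m+1), d1 ≠ d2 →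
      Disjoint (mSet Fq d1) (mSet Fq d2) := by
    intro d1 _ d2 _ hne
    refine Finset.disjoint_left.2 fun p hp1 hp2 => ?_
    rw [mem_mSet] at hp1 hp2
    exact hne (hp1.2 ▸ hp2.2 ▸ rfl)
  rw [mLe, Finset.sum_biUnion hdisj]
  calc ∑ d ∈ Finset.range (m+1), ∑ A ∈ mSet Fq d, ((Fintype.card Fq : ℝ) ^ A.natDegree)⁻¹
      ≤ ∑ d ∈ Finset.range (m+1), (1:ℝ) := by
        refine Finset.sum_le_sum fun d _ => ?_
        have h1 : ∑ A ∈ mSet Fq d, ((Fintype.card Fq : ℝ) ^ A.natDegree)⁻¹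
            = (mSet Fq d).card * ((Fintype.card Fq : ℝ) ^ d)⁻¹ := by
          rw [Finset.sum_congr rfl fun A hA => by rw [(mem_mSet.1 hA).2]]
          simp [mul_comm]
        rw [h1]
        calc ((mSet Fq d).card : ℝ) * ((Fintype.card Fq:ℝ) ^ d)⁻¹
            ≤ (Fintype.card Fq:ℝ)^d * ((Fintype.card Fq:ℝ)^d)⁻¹ :=
              mul_le_mul_of_nonneg_right (card_mSet_le d) (by positivity)
          _ = 1 := mul_inv_cancel₀ (by positivity)
    _ = (m:ℝ) + 1 := by simp [Finset.sum_const]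

lemma core (F K : Polynomial Fq) (hF : F.Monic) (hK : K.Monic) (x : ℕ)
    (hx : (K * F).natDegree < x) :
    ∑ N ∈ (mSet Fq x).filter (fun N => IsCoprime N F), (ffD N : ℝ) * (ffD (K * F + N) : ℝ)
      ≤ 4 * (Fintype.card Fq : ℝ) ^ x * (x : ℝ) ^ 2 *
        ∑ H ∈ (mLe Fq x).filter (fun H => H ∣ K ∧ 2 * H.natDegree ≤ x),
          (ffD H : ℝ) / (Fintype.card Fq : ℝ) ^ H.natDegree := by
  set q : ℝ := (Fintype.card Fq : ℝ) with hqdef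
  have hq0 : (0:ℝ) < q := by
    rw [hqdef]; exact_mod_cast Fintype.card_pos
  have hx1 : 1 ≤ x := Nat.one_le_iff_ne_zero.2 (by omega)
  set S : Finset (Polynomial Fq) := (mSet Fq x).filter (fun N => IsCoprime N F) with hSdef
  set TH : Finset (Polynomial Fq) :=
    (mLe Fq x).filter (fun H => H ∣ K ∧ 2 * H.natDegree ≤ x) with hTHdef
  set P : Finset (Polynomial Fq × Polynomial Fq) := (mLe Fq x) ×ˢ (mLe Fq x) with hPdef
  set U : Finset (Polynomial Fq) := mLe Fq (x / 2) with hUdef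
  have hKF0 : K * F ≠ 0 := (hK.mul hF).ne_zero
  -- facts about N ∈ S
  have hMfact : ∀ N ∈ S, N.Monic ∧ N.natDegree = x ∧ IsCoprime N F ∧
      (K * F + N).Monic ∧ (K * F + N).natDegree = x := by
    intro N hN
    rw [hSdef, Finset.mem_filter, mem_mSet] at hN
    obtain ⟨⟨hNm, hNd⟩, hNF⟩ := hN
    have hdlt : (K * F).degree < N.degree := by
      rw [degree_eq_natDegree hKF0, degree_eq_natDegree hNm.ne_zero, hNd]
      exact_mod_cast hx
    refine ⟨hNm, hNd, hNF, hNm.add_of_right hdlt, ?_⟩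
    rw [natDegree_add_eq_right_of_degree_lt hdlt, hNd]
  -- the small-divisor finsets
  have step1 : ∑ N ∈ S, (ffD N : ℝ) * (ffD (K * F + N) : ℝ)
      ≤ 4 * ((∑ N ∈ S, ((mLe Fq x).filter (fun A => A ∣ N ∧ 2 * A.natDegree ≤ x)).card *
          ((mLe Fq x).filter (fun B => B ∣ (K * F + N) ∧ 2 * B.natDegree ≤ x)).card : ℕ) : ℝ) := by
    push_cast
    rw [Finset.mul_sum]
    refine Finset.sum_le_sum fun N hN => ?_
    obtain ⟨hNm, hNd, hNF, hMm, hMd⟩ := hMfact N hN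
    have h1 := ffD_le_two_mul (Fq := Fq) hNm hNd
    have h2 := ffD_le_two_mul (Fq := Fq) hMm hMd
    have := Nat.mul_le_mul h1 h2
    calc (ffD N : ℝ) * (ffD (K * F + N) : ℝ)
        ≤ ((2 * ((mLe Fq x).filter (fun A => A ∣ N ∧ 2 * A.natDegree ≤ x)).card) *
           (2 * ((mLe Fq x).filter (fun B => B ∣ (K * F + N) ∧ 2 * B.natDegree ≤ x)).card) : ℕ) := by
          exact_mod_cast this
      _ = 4 * (((mLe Fq x).filter (fun A => A ∣ N ∧ 2 * A.natDegree ≤ x)).card : ℝ) *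
            (((mLe Fq x).filter (fun B => B ∣ (K * F + N) ∧ 2 * B.natDegree ≤ x)).card : ℝ) := by
          push_cast; ring
      _ = _ := by ring
  -- swap the order of summation
  set cnd : Polynomial Fq × Polynomial Fq → Polynomial Fq → Prop :=
    fun p N => (p.1 ∣ N ∧ 2 * p.1.natDegree ≤ x) ∧ (p.2 ∣ (K * F + N) ∧ 2 * p.2.natDegree ≤ x)
    with hcnddef
  set c : Polynomial Fq × Polynomial Fq → ℕ := fun p => (S.filter (cnd p)).card with hcdef
  have step2 : (∑ N ∈ S, ((mLe Fq x).filter (fun A => A ∣ N ∧ 2 * A.natDegree ≤ x)).card *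
      ((mLe Fq x).filter (fun B => B ∣ (K * F + N) ∧ 2 * B.natDegree ≤ x)).card : ℕ)
      = ∑ p ∈ P, c p := by
    have hptw : ∀ N, ((mLe Fq x).filter (fun A => A ∣ N ∧ 2 * A.natDegree ≤ x)).card *
        ((mLe Fq x).filter (fun B => B ∣ (K * F + N) ∧ 2 * B.natDegree ≤ x)).card
        = ∑ p ∈ P, if cnd p N then 1 else 0 := by
      intro N
      rw [Finset.card_filter, Finset.card_filter, Finset.sum_mul_sum, hPdef, Finset.sum_product]
      refine Finset.sum_congr rfl fun A _ => Finset.sum_congr rfl fun B _ => ?_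
      by_cases h1 : A ∣ N ∧ 2 * A.natDegree ≤ x <;>
        by_cases h2 : B ∣ (K * F + N) ∧ 2 * B.natDegree ≤ x <;>
        simp [hcnddef, h1, h2]
    calc (∑ N ∈ S, ((mLe Fq x).filter (fun A => A ∣ N ∧ 2 * A.natDegree ≤ x)).card *
        ((mLe Fq x).filter (fun B => B ∣ (K * F + N) ∧ 2 * B.natDegree ≤ x)).card : ℕ)
        = ∑ N ∈ S, ∑ p ∈ P, if cnd p N then 1 else 0 :=
          Finset.sum_congr rfl fun N _ => hptw N
      _ = ∑ p ∈ P, ∑ N ∈ S, if cnd p N then 1 else 0 := Finset.sum_comm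
      _ = ∑ p ∈ P, c p := Finset.sum_congr rfl fun p _ => (Finset.card_filter _ _).symm
  -- the map to triples
  set f : Polynomial Fq × Polynomial Fq → Polynomial Fq × (Polynomial Fq × Polynomial Fq) :=
    fun p => (normalize (gcd p.1 p.2),
      (p.1 /ₘ normalize (gcd p.1 p.2), p.2 /ₘ normalize (gcd p.1 p.2))) with hfdef
  set w : Polynomial Fq × (Polynomial Fq × Polynomial Fq) → ℝ :=
    fun t => q ^ x * (q ^ (t.1.natDegree + t.2.1.natDegree + t.2.2.natDegree))⁻¹ with hwdef
  set T2 : Finset (Polynomial Fq × (Polynomial Fq × Polynomial Fq)) := TH ×ˢ (U ×ˢ U)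
    with hT2def
  have key : ∀ p ∈ P, c p ≠ 0 → (f p ∈ T2 ∧ (c p : ℝ) ≤ w (f p)) ∧
      p.1 = (f p).1 * (f p).2.1 ∧ p.2 = (f p).1 * (f p).2.2 := by
    rintro ⟨A, B⟩ hp hc
    rw [hPdef, Finset.mem_product] at hp
    obtain ⟨hA, hB⟩ := hp
    obtain ⟨hAm, hAx⟩ := mem_mLe.1 hA
    obtain ⟨hBm, hBx⟩ := mem_mLe.1 hB
    have hA0 : A ≠ 0 := hAm.ne_zero
    have hB0 : B ≠ 0 := hBm.ne_zero
    obtain ⟨N₀, hN₀⟩ := Finset.card_ne_zero.1 hc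
    rw [Finset.mem_filter] at hN₀
    obtain ⟨hN₀S, hcnd⟩ := hN₀
    rw [hcnddef] at hcnd
    dsimp only at hcnd
    obtain ⟨hN₀m, hN₀d, hN₀F, hMm, hMd⟩ := hMfact N₀ hN₀S
    obtain ⟨⟨hAd, hAdeg⟩, hBd, hBdeg⟩ := hcnd
    -- gcd and lcm
    have hg0 : gcd A B ≠ 0 := fun h => hA0 ((gcd_eq_zero_iff A B).1 h).1
    have hl0 : lcm A B ≠ 0 := fun h => by
      rcases (lcm_eq_zero_iff A B).1 h with h' | h'
      exacts [hA0 h', hB0 h']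
    set G : Polynomial Fq := normalize (gcd A B) with hGdef
    set L : Polynomial Fq := normalize (lcm A B) with hLdef
    have hG0 : G ≠ 0 := by simp [hGdef, hg0]
    have hL0 : L ≠ 0 := by simp [hLdef, hl0]
    have hGm : G.Monic := monic_normalize hg0
    have hLm : L.Monic := monic_normalize hl0
    have hGA : G ∣ A := normalize_dvd_iff.2 (gcd_dvd_left A B)
    have hGB : G ∣ B := normalize_dvd_iff.2 (gcd_dvd_right A B)
    have hAL : A ∣ L := dvd_normalize_iff.2 (dvd_lcm_left A B)
    have hBL : B ∣ L := dvd_normalize_iff.2 (dvd_lcm_right A B)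
    have hGdeg : G.natDegree = (gcd A B).natDegree := natDegree_eq_natDegree degree_normalize
    have hLdeg : L.natDegree = (lcm A B).natDegree := natDegree_eq_natDegree degree_normalize
    have hdegsum : G.natDegree + L.natDegree = A.natDegree + B.natDegree := by
      have hassoc : Associated (gcd A B * lcm A B) (A * B) := gcd_mul_lcm A B
      have := natDegree_eq_natDegree (degree_eq_degree_of_associated hassoc)
      rw [natDegree_mul hg0 hl0, natDegree_mul hA0 hB0] at this
      rw [hGdeg, hLdeg, this]
    have hdGA : G.natDegree ≤ A.natDegree := natDegree_le_of_dvd hGA hA0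
    have hdGB : G.natDegree ≤ B.natDegree := natDegree_le_of_dvd hGB hB0
    -- quotients
    have hA'eq : G * (A /ₘ G) = A := dvd_self_divByMonic hGm hGA
    have hB'eq : G * (B /ₘ G) = B := dvd_self_divByMonic hGm hGB
    have hA'm : (A /ₘ G).Monic := by
      unfold Monic
      rw [leadingCoeff_divByMonic_of_monic hGm (degree_le_of_dvd hGA hA0)]
      exact hAm
    have hB'm : (B /ₘ G).Monic := by
      unfold Monic
      rw [leadingCoeff_divByMonic_of_monic hGm (degree_le_of_dvd hGB hB0)]
      exact hBm
    have hA'd : (A /ₘ G).natDegree = A.natDegree - G.natDegree := natDegree_divByMonic _ hGm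
    have hB'd : (B /ₘ G).natDegree = B.natDegree - G.natDegree := natDegree_divByMonic _ hGm
    -- G divides K
    have hGN : G ∣ N₀ := hGA.trans hAd
    have hGKF : G ∣ K * F := by
      have h1 : G ∣ (K * F + N₀) - N₀ := dvd_sub (hGB.trans hBd) hGN
      simpa using h1
    have hGK : G ∣ K := (hN₀F.of_isCoprime_of_dvd_left hGN).dvd_of_dvd_mul_right hGKF
    have hGTH : G ∈ TH := by
      rw [hTHdef, Finset.mem_filter, mem_mLe]
      exact ⟨⟨hGm, by omega⟩, hGK, by omega⟩
    have hA'U : A /ₘ G ∈ U := by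
      rw [hUdef, mem_mLe]
      exact ⟨hA'm, by omega⟩
    have hB'U : B /ₘ G ∈ U := by
      rw [hUdef, mem_mLe]
      exact ⟨hB'm, by omega⟩
    -- counting
    have hdLx : L.natDegree ≤ x := by omega
    have hsub : S.filter (cnd (A, B)) ⊆ (mSet Fq x).filter (fun N => N %ₘ L = N₀ %ₘ L) := by
      intro N hN
      rw [Finset.mem_filter] at hN
      obtain ⟨hNS, hNcnd⟩ := hN
      rw [hcnddef] at hNcnd
      dsimp only at hNcnd
      obtain ⟨⟨hNA, -⟩, hNB, -⟩ := hNcnd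
      have hNmem : N ∈ mSet Fq x := Finset.mem_of_mem_filter _ hNS
      have hArc : A ∣ N - N₀ := dvd_sub hNA hAd
      have hBrc : B ∣ N - N₀ := by
        have h1 : B ∣ (K * F + N) - (K * F + N₀) := dvd_sub hNB hBd
        simpa using h1
      have hLrc : L ∣ N - N₀ := normalize_dvd_iff.2 (lcm_dvd hArc hBrc)
      have hmod : (N - N₀) %ₘ L = 0 := (modByMonic_eq_zero_iff_dvd hLm).2 hLrc
      rw [sub_modByMonic] at hmod
      rw [Finset.mem_filter]
      exact ⟨hNmem, sub_eq_zero.1 hmod⟩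
    have hcount : (c (A, B) : ℝ) ≤ q ^ (x - L.natDegree) := by
      calc (c (A, B) : ℝ) ≤ (((mSet Fq x).filter (fun N => N %ₘ L = N₀ %ₘ L)).card : ℝ) := by
            exact_mod_cast Finset.card_le_card hsub
        _ ≤ q ^ (x - L.natDegree) := card_residue_le hLm hdLx
    have hwval : (c (A, B) : ℝ) ≤ w (f (A, B)) := by
      have hsum' : G.natDegree + (A /ₘ G).natDegree + (B /ₘ G).natDegree = L.natDegree := by
        omega
      have hpow : q ^ (x - L.natDegree) = q ^ x * (q ^ L.natDegree)⁻¹ := by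
        rw [eq_mul_inv_iff_mul_eq₀ (by positivity), ← pow_add, Nat.sub_add_cancel hdLx]
      rw [hwdef, hfdef]
      dsimp only
      rw [← hGdef, hsum', ← hpow]
      exact hcount
    refine ⟨⟨?_, hwval⟩, ?_, ?_⟩
    · rw [hT2def, Finset.mem_product, Finset.mem_product]
      exact ⟨hGTH, hA'U, hB'U⟩
    · exact hA'eq.symm
    · exact hB'eq.symm
  -- sum over pairs bounded by sum over triples
  have step3 : ∑ p ∈ P, (c p : ℝ) ≤ ∑ t ∈ T2, w t := by
    have e1 : ∑ p ∈ P, (c p : ℝ) = ∑ p ∈ P.filter (fun p => c p ≠ 0), (c p : ℝ) := by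
      refine (Finset.sum_subset (Finset.filter_subset _ _) ?_).symm
      intro p hp hnp
      rw [Finset.mem_filter] at hnp
      push_neg at hnp
      rw [hnp hp]
      simp
    have hinj : ∀ p₁ ∈ P.filter (fun p => c p ≠ 0), ∀ p₂ ∈ P.filter (fun p => c p ≠ 0),
        f p₁ = f p₂ → p₁ = p₂ := by
      intro p₁ hp₁ p₂ hp₂ heq
      rw [Finset.mem_filter] at hp₁ hp₂
      obtain ⟨⟨-, -⟩, e11, e12⟩ := key p₁ hp₁.1 hp₁.2
      obtain ⟨⟨-, -⟩, e21, e22⟩ := key p₂ hp₂.1 hp₂.2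
      refine Prod.ext ?_ ?_
      · rw [e11, e21, heq]
      · rw [e12, e22, heq]
    have e2 : ∑ p ∈ P.filter (fun p => c p ≠ 0), (c p : ℝ)
        ≤ ∑ p ∈ P.filter (fun p => c p ≠ 0), w (f p) := by
      refine Finset.sum_le_sum fun p hp => ?_
      rw [Finset.mem_filter] at hp
      exact ((key p hp.1 hp.2).1).2
    have e3 : ∑ p ∈ P.filter (fun p => c p ≠ 0), w (f p)
        = ∑ t ∈ (P.filter (fun p => c p ≠ 0)).image f, w t :=
      (Finset.sum_image (fun p₁ h₁ p₂ h₂ h => hinj p₁ h₁ p₂ h₂ h)).symm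
    have e4 : (P.filter (fun p => c p ≠ 0)).image f ⊆ T2 := by
      intro t ht
      rw [Finset.mem_image] at ht
      obtain ⟨p, hp, rfl⟩ := ht
      rw [Finset.mem_filter] at hp
      exact ((key p hp.1 hp.2).1).1
    have e5 : ∑ t ∈ (P.filter (fun p => c p ≠ 0)).image f, w t ≤ ∑ t ∈ T2, w t := by
      refine Finset.sum_le_sum_of_subset_of_nonneg e4 fun t _ _ => ?_
      rw [hwdef]
      positivity
    calc ∑ p ∈ P, (c p : ℝ) = _ := e1
      _ ≤ _ := e2
      _ = _ := e3
      _ ≤ _ := e5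
  -- evaluate the sum over triples
  have step4 : ∑ t ∈ T2, w t
      = q ^ x * (∑ G ∈ TH, (q ^ G.natDegree)⁻¹) *
        ((∑ A ∈ U, (q ^ A.natDegree)⁻¹) * (∑ B ∈ U, (q ^ B.natDegree)⁻¹)) := by
    rw [hT2def, Finset.sum_product]
    calc ∑ G ∈ TH, ∑ z ∈ U ×ˢ U, w (G, z)
        = ∑ G ∈ TH, ∑ z ∈ U ×ˢ U,
            (q ^ x * (q ^ G.natDegree)⁻¹) * ((q ^ z.1.natDegree)⁻¹ * (q ^ z.2.natDegree)⁻¹) := by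
          refine Finset.sum_congr rfl fun G _ => Finset.sum_congr rfl fun z _ => ?_
          rw [hwdef]
          dsimp only
          rw [pow_add, pow_add, mul_inv, mul_inv]
          ring
      _ = ∑ G ∈ TH, (q ^ x * (q ^ G.natDegree)⁻¹) *
            ∑ z ∈ U ×ˢ U, ((q ^ z.1.natDegree)⁻¹ * (q ^ z.2.natDegree)⁻¹) := by
          exact Finset.sum_congr rfl fun G _ => (Finset.mul_sum _ _ _).symm
      _ = (∑ G ∈ TH, q ^ x * (q ^ G.natDegree)⁻¹) *
            ∑ z ∈ U ×ˢ U, ((q ^ z.1.natDegree)⁻¹ * (q ^ z.2.natDegree)⁻¹) :=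
          (Finset.sum_mul _ _ _).symm
      _ = q ^ x * (∑ G ∈ TH, (q ^ G.natDegree)⁻¹) *
            ((∑ A ∈ U, (q ^ A.natDegree)⁻¹) * (∑ B ∈ U, (q ^ B.natDegree)⁻¹)) := by
          rw [← Finset.mul_sum, Finset.sum_mul_sum, Finset.sum_product]
  -- final bounds
  have hU0 : (0:ℝ) ≤ ∑ A ∈ U, (q ^ A.natDegree)⁻¹ :=
    Finset.sum_nonneg fun A _ => by positivity
  have hTH0 : (0:ℝ) ≤ ∑ G ∈ TH, (q ^ G.natDegree)⁻¹ :=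
    Finset.sum_nonneg fun G _ => by positivity
  have hUx : ∑ A ∈ U, (q ^ A.natDegree)⁻¹ ≤ (x : ℝ) := by
    calc ∑ A ∈ U, (q ^ A.natDegree)⁻¹ ≤ ((x / 2 : ℕ) : ℝ) + 1 := sum_inv_mLe _
      _ ≤ (x : ℝ) := by
          have : (x / 2 : ℕ) + 1 ≤ x := by omega
          exact_mod_cast this
  have hTHle : (∑ G ∈ TH, (q ^ G.natDegree)⁻¹) ≤ ∑ H ∈ TH, (ffD H : ℝ) / q ^ H.natDegree := by
    refine Finset.sum_le_sum fun G hG => ?_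
    rw [hTHdef, Finset.mem_filter, mem_mLe] at hG
    have h1 : (1:ℝ) ≤ (ffD G : ℝ) := by exact_mod_cast one_le_ffD hG.1.1.ne_zero
    rw [inv_eq_one_div]
    exact div_le_div_of_nonneg_right h1 (by positivity) |>.trans_eq rfl
  have hSig0 : (0:ℝ) ≤ ∑ H ∈ TH, (ffD H : ℝ) / q ^ H.natDegree :=
    Finset.sum_nonneg fun H _ => by positivity
  calc ∑ N ∈ S, (ffD N : ℝ) * (ffD (K * F + N) : ℝ)
      ≤ 4 * ((∑ N ∈ S, ((mLe Fq x).filter (fun A => A ∣ N ∧ 2 * A.natDegree ≤ x)).card *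
          ((mLe Fq x).filter (fun B => B ∣ (K * F + N) ∧ 2 * B.natDegree ≤ x)).card : ℕ) : ℝ) :=
        step1
    _ = 4 * ((∑ p ∈ P, c p : ℕ) : ℝ) := by rw [step2]
    _ = 4 * ∑ p ∈ P, (c p : ℝ) := by push_cast; ring
    _ ≤ 4 * ∑ t ∈ T2, w t := by linarith [step3]
    _ = 4 * (q ^ x * (∑ G ∈ TH, (q ^ G.natDegree)⁻¹) *
          ((∑ A ∈ U, (q ^ A.natDegree)⁻¹) * (∑ B ∈ U, (q ^ B.natDegree)⁻¹))) := by rw [step4]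
    _ ≤ 4 * (q ^ x * (∑ H ∈ TH, (ffD H : ℝ) / q ^ H.natDegree) * ((x:ℝ) * (x:ℝ))) := by
        have hqx0 : (0:ℝ) ≤ q ^ x := by positivity
        have h1 : (∑ A ∈ U, (q ^ A.natDegree)⁻¹) * (∑ B ∈ U, (q ^ B.natDegree)⁻¹)
            ≤ (x:ℝ) * (x:ℝ) := mul_le_mul hUx hUx hU0 (by positivity)
        have h2 : q ^ x * (∑ G ∈ TH, (q ^ G.natDegree)⁻¹) ≤
            q ^ x * (∑ H ∈ TH, (ffD H : ℝ) / q ^ H.natDegree) :=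
          mul_le_mul_of_nonneg_left hTHle hqx0
        have h3 : (0:ℝ) ≤ q ^ x * (∑ G ∈ TH, (q ^ G.natDegree)⁻¹) := by
          exact mul_nonneg hqx0 hTH0
        nlinarith [mul_le_mul h2 h1 (mul_nonneg hU0 hU0) (mul_nonneg hqx0 hSig0)]
    _ = 4 * q ^ x * (x:ℝ) ^ 2 * ∑ H ∈ TH, (ffD H : ℝ) / q ^ H.natDegree := by ring

end DDSAux

/-- For monic `F, K` and `deg(KF) < x`,
`∑_{N monic, deg N = x, (N,F)=1} d(N)·d(KF+N) ≪ q^x·x²·∑_{H∣K, deg H ≤ x/2} d(H)/|H|`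
with an absolute implied constant. -/
theorem double_divisor_sum_bound :
    ∃ C : ℝ, 0 < C ∧ ∀ (Fq : Type) [Field Fq] [Fintype Fq] (F K : Polynomial Fq),
      F.Monic → K.Monic → ∀ x : ℕ, (K * F).natDegree < x →
      ∑ᶠ (N : Polynomial Fq) (_ : N.Monic ∧ N.natDegree = x ∧ IsCoprime N F),
          (ffD N : ℝ) * (ffD (K * F + N) : ℝ)
        ≤ C * (Fintype.card Fq : ℝ) ^ x * (x : ℝ) ^ 2 *
            ∑ᶠ (H : Polynomial Fq) (_ : H.Monic ∧ H ∣ K ∧ 2 * H.natDegree ≤ x),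
              (ffD H : ℝ) / (Fintype.card Fq : ℝ) ^ H.natDegree := by
  refine ⟨4, by norm_num, ?_⟩
  intro Fq _ _ F K hF hK x hx
  have hL : (∑ᶠ (N : Polynomial Fq) (_ : N.Monic ∧ N.natDegree = x ∧ IsCoprime N F),
        (ffD N : ℝ) * (ffD (K * F + N) : ℝ))
      = ∑ N ∈ (mSet Fq x).filter (fun N => IsCoprime N F),
          (ffD N : ℝ) * (ffD (K * F + N) : ℝ) := by
    refine finsum_cond_eq_sum_of_cond_iff _ ?_
    intro N _
    rw [Finset.mem_filter, mem_mSet]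
    tauto
  have hR : (∑ᶠ (H : Polynomial Fq) (_ : H.Monic ∧ H ∣ K ∧ 2 * H.natDegree ≤ x),
        (ffD H : ℝ) / (Fintype.card Fq : ℝ) ^ H.natDegree)
      = ∑ H ∈ (mLe Fq x).filter (fun H => H ∣ K ∧ 2 * H.natDegree ≤ x),
          (ffD H : ℝ) / (Fintype.card Fq : ℝ) ^ H.natDegree := by
    refine finsum_cond_eq_sum_of_cond_iff _ ?_
    intro H _
    rw [Finset.mem_filter, mem_mLe]
    constructor
    · rintro ⟨h1, h2, h3⟩; exact ⟨⟨h1, by omega⟩, h2, h3⟩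
    · rintro ⟨⟨h1, -⟩, h2, h3⟩; exact ⟨h1, h2, h3⟩
  rw [hL, hR]
  exact core F K hF hK x hx
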